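/- Let n, k ≥ 1 be integers, let A ∈ ℤ^{m×n} with rows a₁, …, a_m and α = max_{i,j}|A_{ij}| ≥ 1, let b ∈ ℤ^m, let E ⊆ {1,…,m}, and let F = {x ∈ ℝⁿ ∣ aᵢᵀx = bᵢ for i ∈ E, aᵢᵀx ≤ bᵢ for i ∉ E}. Assume F ⊆ [0,k]ⁿ, F is nonempty, and F = conv(F ∩ ℤⁿ). Let c̄ ∈ ℝⁿ be nonzero with aᵢᵀc̄ = 0 for every i ∈ E, let ĉ = (n³kα/‖c̄‖_∞)·c̄, and let c̃ ∈ ℤⁿ be given componentwise by c̃_j = ⌊ĉ_j⌋. Suppose x̃ ∈ F maximizes c̃ᵀx over F, and ỹ ∈ ℝ^m satisfies Aᵀỹ = c̃, ỹᵢ ≥ 0 for i ∉ E, and bᵀỹ = c̃ᵀx̃. Then every x̂ ∈ F that maximizes c̄ᵀx over F satisfies aᵢᵀx̂ = bᵢ for every index i with ỹᵢ > n·k. -/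
import Mathlib


theorem optimal_face_constraints_active
    (n m k α : ℕ) (hn : 1 ≤ n) (hk : 1 ≤ k) (hα : 1 ≤ α)
    (A : Matrix (Fin m) (Fin n) ℤ) (b : Fin m → ℤ)
    (hαmax : α = Finset.univ.sup fun i => Finset.univ.sup fun j => (A i j).natAbs)
    (E : Set (Fin m))
    (F : Set (Fin n → ℝ))
    (hF : F = {x : Fin n → ℝ |
      (∀ i ∈ E, ∑ j, (A i j : ℝ) * x j = (b i : ℝ)) ∧
      (∀ i ∉ E, ∑ j, (A i j : ℝ) * x j ≤ (b i : ℝ))})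
    (hFbox : ∀ x ∈ F, ∀ j, 0 ≤ x j ∧ x j ≤ (k : ℝ))
    (hFne : F.Nonempty)
    (hFlattice : F = convexHull ℝ {x ∈ F | ∀ j, ∃ z : ℤ, x j = (z : ℝ)})
    (cb : Fin n → ℝ) (hcb : cb ≠ 0)
    (horth : ∀ i ∈ E, ∑ j, (A i j : ℝ) * cb j = 0)
    (Cinf : ℝ) (hCinf : IsGreatest ((fun j => |cb j|) '' Set.univ) Cinf)
    (ch : Fin n → ℝ) (hch : ch = fun j => ((n : ℝ) ^ 3 * k * α / Cinf) * cb j)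
    (ct : Fin n → ℤ) (hct : ∀ j, ct j = ⌊ch j⌋)
    (xt : Fin n → ℝ) (hxt : xt ∈ F)
    (hxtopt : ∀ x ∈ F, ∑ j, (ct j : ℝ) * x j ≤ ∑ j, (ct j : ℝ) * xt j)
    (y : Fin m → ℝ)
    (hdual : ∀ j, ∑ i, (A i j : ℝ) * y i = (ct j : ℝ))
    (hynn : ∀ i ∉ E, 0 ≤ y i)
    (hstrong : ∑ i, (b i : ℝ) * y i = ∑ j, (ct j : ℝ) * xt j) :
    ∀ xh ∈ F, (∀ x ∈ F, ∑ j, cb j * x j ≤ ∑ j, cb j * xh j) →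
      ∀ i, (n : ℝ) * k < y i → ∑ j, (A i j : ℝ) * xh j = (b i : ℝ) := by
  intro xh hxh hxhopt i hyi
  -- Cinf > 0
  obtain ⟨j0, hj0⟩ : ∃ j, cb j ≠ 0 := by
    by_contra h; push_neg at h; exact hcb (funext h)
  have hCpos : 0 < Cinf :=
    lt_of_lt_of_le (abs_pos.mpr hj0) (hCinf.2 ⟨j0, Set.mem_univ _, rfl⟩)
  have hnk : (0:ℝ) ≤ (n : ℝ) * k := by positivity
  have hγpos : 0 ≤ (n : ℝ) ^ 3 * k * α / Cinf := by positivity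
  -- key claim for lattice optimal points
  have key : ∀ v ∈ F, (∀ j, ∃ z : ℤ, v j = (z : ℝ)) →
      (∑ j, cb j * xh j ≤ ∑ j, cb j * v j) →
      ∑ j, (A i j : ℝ) * v j = (b i : ℝ) := by
    intro v hvF hvlat hvopt
    -- Step A : ∑ ch j * (xt j - v j) ≤ 0
    have hA : ∑ j, ch j * (xt j - v j) ≤ 0 := by
      have h1 : ∑ j, cb j * xt j - ∑ j, cb j * v j ≤ 0 := by
        have := (hxhopt xt hxt).trans hvopt
        linarith
      have h2 : ∑ j, ch j * (xt j - v j)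
          = ((n : ℝ) ^ 3 * k * α / Cinf) * (∑ j, cb j * xt j - ∑ j, cb j * v j) := by
        rw [hch]
        rw [mul_sub, Finset.mul_sum, Finset.mul_sum, ← Finset.sum_sub_distrib]
        apply Finset.sum_congr rfl
        intro j _
        ring
      rw [h2]
      exact mul_nonpos_of_nonneg_of_nonpos hγpos h1
    -- Step B : ∑ ct j * (xt j - v j) ≤ n * k
    have hB : ∑ j, (ct j : ℝ) * (xt j - v j) ≤ (n : ℝ) * k := by
      have hterm : ∀ j, (ct j : ℝ) * (xt j - v j) ≤ ch j * (xt j - v j) + k := by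
        intro j
        have hf1 : (ct j : ℝ) ≤ ch j := by rw [hct j]; exact Int.floor_le _
        have hf2 : ch j - 1 ≤ (ct j : ℝ) := by
          rw [hct j]; linarith [Int.sub_one_lt_floor (ch j)]
        obtain ⟨h1, h2⟩ := hFbox xt hxt j
        obtain ⟨h3, h4⟩ := hFbox v hvF j
        nlinarith [sq_nonneg (xt j - v j)]
      calc ∑ j, (ct j : ℝ) * (xt j - v j)
          ≤ ∑ j, (ch j * (xt j - v j) + (k : ℝ)) := Finset.sum_le_sum fun j _ => hterm j
        _ = ∑ j, ch j * (xt j - v j) + (n : ℝ) * k := by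
            rw [Finset.sum_add_distrib, Finset.sum_const, Finset.card_univ, Fintype.card_fin,
              nsmul_eq_mul]
        _ ≤ (n : ℝ) * k := by linarith
    -- Step C : ∑ i, y i * (b i - ∑ j A i j * v j) = ∑ ct (xt - v)
    have hC : ∑ i', y i' * ((b i' : ℝ) - ∑ j, (A i' j : ℝ) * v j)
        = ∑ j, (ct j : ℝ) * (xt j - v j) := by
      have hswap : ∑ j, (ct j : ℝ) * v j = ∑ i', y i' * ∑ j, (A i' j : ℝ) * v j := by
        calc ∑ j, (ct j : ℝ) * v j
            = ∑ j, (∑ i', (A i' j : ℝ) * y i') * v j := by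
              refine Finset.sum_congr rfl fun j _ => by rw [hdual j]
          _ = ∑ j, ∑ i', (A i' j : ℝ) * y i' * v j := by
              refine Finset.sum_congr rfl fun j _ => Finset.sum_mul _ _ _
          _ = ∑ i', ∑ j, (A i' j : ℝ) * y i' * v j := Finset.sum_comm
          _ = ∑ i', y i' * ∑ j, (A i' j : ℝ) * v j := by
              refine Finset.sum_congr rfl fun i' _ => ?_
              rw [Finset.mul_sum]
              exact Finset.sum_congr rfl fun j _ => by ring
      have hsub : ∑ j, (ct j : ℝ) * (xt j - v j)
          = ∑ j, (ct j : ℝ) * xt j - ∑ j, (ct j : ℝ) * v j := by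
        rw [← Finset.sum_sub_distrib]
        exact Finset.sum_congr rfl fun j _ => by ring
      rw [hsub, ← hstrong, hswap, ← Finset.sum_sub_distrib]
      exact Finset.sum_congr rfl fun i' _ => by ring
    -- terms are nonneg
    rw [hF] at hvF
    obtain ⟨hvE, hvNE⟩ := hvF
    have hnonneg : ∀ i' ∈ (Finset.univ : Finset (Fin m)),
        0 ≤ y i' * ((b i' : ℝ) - ∑ j, (A i' j : ℝ) * v j) := by
      intro i' _
      by_cases hE : i' ∈ E
      · rw [hvE i' hE]; simp
      · exact mul_nonneg (hynn i' hE) (by linarith [hvNE i' hE])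
    have hsingle : y i * ((b i : ℝ) - ∑ j, (A i j : ℝ) * v j) ≤ (n : ℝ) * k := by
      calc y i * ((b i : ℝ) - ∑ j, (A i j : ℝ) * v j)
          ≤ ∑ i', y i' * ((b i' : ℝ) - ∑ j, (A i' j : ℝ) * v j) :=
            Finset.single_le_sum hnonneg (Finset.mem_univ i)
        _ = ∑ j, (ct j : ℝ) * (xt j - v j) := hC
        _ ≤ (n : ℝ) * k := hB
    -- the slack is an integer
    choose zv hzv using hvlat
    have hint : ∑ j, (A i j : ℝ) * v j = ((∑ j, A i j * zv j : ℤ) : ℝ) := by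
      push_cast
      exact Finset.sum_congr rfl fun j _ => by rw [hzv j]
    by_cases hE : i ∈ E
    · exact hvE i hE
    · have hslack0 : (0:ℝ) ≤ (b i : ℝ) - ∑ j, (A i j : ℝ) * v j := by
        linarith [hvNE i hE]
      have hse : (b i : ℝ) - ∑ j, (A i j : ℝ) * v j
          = ((b i - ∑ j, A i j * zv j : ℤ) : ℝ) := by
        rw [hint]; push_cast; ring
      rw [hse] at hslack0 hsingle
      have hs0 : 0 ≤ b i - ∑ j, A i j * zv j := by exact_mod_cast hslack0
      have hslt1 : b i - ∑ j, A i j * zv j < 1 := by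
        by_contra hge
        push_neg at hge
        have hge' : (1:ℝ) ≤ ((b i - ∑ j, A i j * zv j : ℤ) : ℝ) := by exact_mod_cast hge
        have : y i ≤ y i * ((b i - ∑ j, A i j * zv j : ℤ) : ℝ) :=
          le_mul_of_one_le_right (by linarith) hge'
        linarith
      have hs0' : b i - ∑ j, A i j * zv j = 0 := by omega
      have : ((b i - ∑ j, A i j * zv j : ℤ) : ℝ) = 0 := by exact_mod_cast hs0'
      linarith [hse, this]
  -- decompose xh into lattice points
  have hxhc : xh ∈ convexHull ℝ {x ∈ F | ∀ j, ∃ z : ℤ, x j = (z : ℝ)} := hFlattice ▸ hxh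
  rw [convexHull_eq] at hxhc
  obtain ⟨ι, t, w, z, hw0, hw1, hzL, hcm⟩ := hxhc
  rw [Finset.centerMass_eq_of_sum_1 _ _ hw1] at hcm
  have heval : ∀ c : Fin n → ℝ, ∑ j, c j * xh j = ∑ v ∈ t, w v * ∑ j, c j * z v j := by
    intro c
    rw [← hcm]
    calc ∑ j, c j * (∑ v ∈ t, w v • z v) j
        = ∑ j, ∑ v ∈ t, c j * (w v * z v j) := by
          refine Finset.sum_congr rfl fun j _ => ?_
          rw [Finset.sum_apply, Finset.mul_sum]
          exact Finset.sum_congr rfl fun v _ => by simp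
      _ = ∑ v ∈ t, ∑ j, c j * (w v * z v j) := Finset.sum_comm
      _ = ∑ v ∈ t, w v * ∑ j, c j * z v j := by
          refine Finset.sum_congr rfl fun v _ => ?_
          rw [Finset.mul_sum]; exact Finset.sum_congr rfl fun j _ => by ring
  -- each support point is optimal for cb
  have hopt : ∀ v ∈ t, w v ≠ 0 → ∑ j, cb j * xh j ≤ ∑ j, cb j * z v j := by
    intro v hv hwv
    have hzero : ∀ u ∈ t, w u * (∑ j, cb j * xh j - ∑ j, cb j * z u j) = 0 := by
      have hsum0 : ∑ u ∈ t, w u * (∑ j, cb j * xh j - ∑ j, cb j * z u j) = 0 := by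
        have h1 : ∑ u ∈ t, w u * (∑ j, cb j * xh j - ∑ j, cb j * z u j)
            = (∑ u ∈ t, w u) * (∑ j, cb j * xh j) - ∑ u ∈ t, w u * ∑ j, cb j * z u j := by
          rw [Finset.sum_mul, ← Finset.sum_sub_distrib]
          exact Finset.sum_congr rfl fun u _ => by ring
        rw [h1, hw1, one_mul, ← heval cb, sub_self]
      have hnn : ∀ u ∈ t, 0 ≤ w u * (∑ j, cb j * xh j - ∑ j, cb j * z u j) := by
        intro u hu
        exact mul_nonneg (hw0 u hu) (by linarith [hxhopt (z u) (hzL u hu).1])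
      intro u hu
      exact (Finset.sum_eq_zero_iff_of_nonneg hnn).mp hsum0 u hu
    have := hzero v hv
    rcases mul_eq_zero.mp this with h | h
    · exact absurd h hwv
    · linarith
  -- conclude
  rw [heval (fun j => (A i j : ℝ))]
  have : ∀ v ∈ t, w v * ∑ j, (A i j : ℝ) * z v j = w v * (b i : ℝ) := by
    intro v hv
    rcases eq_or_ne (w v) 0 with h | h
    · rw [h, zero_mul, zero_mul]
    · rw [key (z v) (hzL v hv).1 (hzL v hv).2 (hopt v hv h)]
  rw [Finset.sum_congr rfl this, ← Finset.sum_mul, hw1, one_mul]
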